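/- Let f : T → ℂ be integrable (f ∈ L^1(T)) and let K be a closed subset of C_f, the set of all points of T at which f is continuous. Then the Cesàro means σ_n(x,f) of the Fourier series of f converge to f(x) uniformly on K as n → ∞. -/

import Mathlib

open MeasureTheory Filter Topology AddCircle

instance fact_two_pi_pos : Fact (0 < 2 * Real.pi) := ⟨Real.two_pi_pos⟩

noncomputable section FejerAux

local notation "𝕋" => AddCircle (2 * Real.pi)
local notation "μh" => (haarAddCircle : Measure 𝕋)

/-- Partial geometric sum `G_n(s) = ∑_{j=0}^n e^{ijs}`. -/
def Gk (n : ℕ) (s : 𝕋) : ℂ := ∑ j ∈ Finset.range (n + 1), fourier (j : ℤ) s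

/-- Sum of Dirichlet kernels `(n+1)·F_n(s) = ∑_{i=0}^n D_i(s)`. -/
def SK (n : ℕ) (s : 𝕋) : ℂ :=
  ∑ i ∈ Finset.range (n + 1), ∑ k ∈ Finset.Icc (-(i : ℤ)) (i : ℤ), fourier k s

/-- The (unnormalized) Fejér kernel as a real-valued function. -/
def Kr (n : ℕ) (s : 𝕋) : ℝ := Complex.normSq (Gk n s)

lemma norm_fourier (k : ℤ) (x : 𝕋) : ‖fourier k x‖ = 1 := by
  simp [fourier_apply, Circle.norm_coe]

lemma fourier_mul (j l : ℤ) (s : 𝕋) : fourier j s * fourier l s = fourier (j + l) s :=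
  (fourier_add).symm

lemma fourier_sub_arg (k : ℤ) (x t : 𝕋) : fourier k (x - t) = fourier k x * fourier (-k) t := by
  simp only [fourier_apply, sub_eq_add_neg, smul_add, smul_neg, ← neg_smul, toCircle_add,
    Circle.coe_mul]

lemma continuous_Gk (n : ℕ) : Continuous (Gk n) := by
  unfold Gk; exact continuous_finset_sum _ fun j _ => (fourier (j : ℤ)).continuous

lemma continuous_SK (n : ℕ) : Continuous (SK n) := by
  unfold SK
  exact continuous_finset_sum _ fun i _ => continuous_finset_sum _ fun k _ => (fourier k).continuous

lemma continuous_Kr (n : ℕ) : Continuous (Kr n) :=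
  Complex.continuous_normSq.comp (continuous_Gk n)

lemma Kr_nonneg (n : ℕ) (s : 𝕋) : 0 ≤ Kr n s := Complex.normSq_nonneg _

lemma conj_Gk (n : ℕ) (s : 𝕋) :
    (starRingEnd ℂ) (Gk n s) = ∑ j ∈ Finset.range (n + 1), fourier (-(j : ℤ)) s := by
  unfold Gk; rw [map_sum]; exact Finset.sum_congr rfl fun j _ => (fourier_neg).symm

lemma fourier_mul_conj_Gk (m : ℕ) (s : 𝕋) :
    fourier (m : ℤ) s * (starRingEnd ℂ) (Gk m s) = Gk m s := by
  rw [conj_Gk, Finset.mul_sum]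
  have h1 : ∀ j ∈ Finset.range (m + 1),
      fourier (m : ℤ) s * fourier (-(j : ℤ)) s = (fun j : ℕ => fourier (j : ℤ) s) (m - j) := by
    intro j hj
    rw [Finset.mem_range, Nat.lt_succ_iff] at hj
    rw [fourier_mul]
    congr 1
    push_cast [Nat.cast_sub hj]
    ring
  rw [Finset.sum_congr rfl h1]
  have := Finset.sum_range_reflect (fun j : ℕ => fourier (j : ℤ) s) (m + 1)
  simpa [Gk] using this

lemma conj_Gk_succ (n : ℕ) (s : 𝕋) :
    fourier (-1 : ℤ) s * (starRingEnd ℂ) (Gk n s) = (starRingEnd ℂ) (Gk (n + 1) s) - 1 := by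
  rw [conj_Gk, conj_Gk, Finset.mul_sum]
  rw [Finset.sum_range_succ' (fun j : ℕ => fourier (-(j : ℤ)) s) (n + 1)]
  simp only [Nat.cast_zero, neg_zero, fourier_zero, add_sub_cancel_right]
  refine Finset.sum_congr rfl fun j _ => ?_
  rw [fourier_mul]
  congr 1
  push_cast
  ring

lemma Dk_eq (m : ℕ) (s : 𝕋) :
    ∑ k ∈ Finset.Icc (-(m : ℤ)) (m : ℤ), fourier k s
      = Gk m s + (starRingEnd ℂ) (Gk m s) - 1 := by
  induction m with
  | zero => simp [Gk]
  | succ m ih =>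
      have hset : Finset.Icc (-(m + 1 : ℕ) : ℤ) ((m + 1 : ℕ) : ℤ)
          = insert (-(m + 1 : ℕ) : ℤ) (insert ((m + 1 : ℕ) : ℤ)
              (Finset.Icc (-(m : ℕ) : ℤ) (m : ℤ))) := by
        ext k; simp only [Finset.mem_Icc, Finset.mem_insert]; push_cast; omega
      rw [hset,
        Finset.sum_insert (by simp only [Finset.mem_insert, Finset.mem_Icc]; push_cast; omega),
        Finset.sum_insert (by simp only [Finset.mem_Icc]; push_cast; omega), ih]
      have hG : Gk (m + 1) s = Gk m s + fourier ((m + 1 : ℕ) : ℤ) s := by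
        unfold Gk; rw [Finset.sum_range_succ]
      rw [hG, map_add, ← fourier_neg]
      ring

lemma SK_eq (n : ℕ) (s : 𝕋) : SK n s = Gk n s * (starRingEnd ℂ) (Gk n s) := by
  induction n with
  | zero => simp [SK, Gk]
  | succ n ih =>
      unfold SK at ih ⊢
      rw [Finset.sum_range_succ, ih, Dk_eq]
      have hG : Gk (n + 1) s = Gk n s + fourier ((n + 1 : ℕ) : ℤ) s := by
        unfold Gk; rw [Finset.sum_range_succ]
      have hG' : (starRingEnd ℂ) (Gk (n + 1) s)
          = (starRingEnd ℂ) (Gk n s) + fourier (-((n + 1 : ℕ) : ℤ)) s := by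
        rw [hG, map_add, ← fourier_neg]
      have h1 : fourier ((n + 1 : ℕ) : ℤ) s * (starRingEnd ℂ) (Gk (n + 1) s) = Gk (n + 1) s :=
        fourier_mul_conj_Gk (n + 1) s
      have hc : (starRingEnd ℂ) (Gk n s) = fourier (-(n : ℤ)) s * Gk n s := by
        have h := congrArg (starRingEnd ℂ) (fourier_mul_conj_Gk n s)
        rw [map_mul, Complex.conj_conj, ← fourier_neg] at h
        exact h.symm
      have hidx : (-((n + 1 : ℕ) : ℤ)) = (-1) + (-(n : ℤ)) := by push_cast; ring
      have h4 : Gk n s * fourier (-((n + 1 : ℕ) : ℤ)) s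
          = (starRingEnd ℂ) (Gk (n + 1) s) - 1 := by
        rw [hidx, ← fourier_mul, ← conj_Gk_succ n s, hc]
        ring
      linear_combination -h1 - h4 - (starRingEnd ℂ) (Gk (n + 1) s) * hG - Gk n s * hG'

lemma SK_ofReal (n : ℕ) (s : 𝕋) : SK n s = ((Kr n s : ℝ) : ℂ) := by
  rw [SK_eq, Complex.mul_conj]; rfl

lemma norm_SK (n : ℕ) (s : 𝕋) : ‖SK n s‖ = Kr n s := by
  rw [SK_ofReal, Complex.norm_real, Real.norm_eq_abs, abs_of_nonneg (Kr_nonneg n s)]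

/-- A continuous function on the circle is integrable. -/
lemma Continuous.integrable_T {E : Type*} [NormedAddCommGroup E] {g : 𝕋 → E}
    (hg : Continuous g) : Integrable g μh :=
  integrableOn_univ.mp (hg.continuousOn.integrableOn_compact isCompact_univ)

lemma MeasureTheory.Integrable.mul_cont {𝕜 : Type*} [RCLike 𝕜] {h : 𝕋 → 𝕜} (hh : Integrable h μh)
    {g : 𝕋 → 𝕜} (hg : Continuous g) : Integrable (fun t => h t * g t) μh := by
  obtain ⟨C0, hC0⟩ := isCompact_univ.exists_bound_of_continuousOn hg.continuousOn
  have := hh.bdd_mul hg.aestronglyMeasurable (Eventually.of_forall fun t => hC0 t trivial)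
  simpa [mul_comm] using this

lemma integral_fourier (k : ℤ) : (∫ t, fourier k t ∂μh) = if k = 0 then 1 else 0 := by
  split_ifs with h
  · subst h
    simp only [fourier_zero]
    simp [measure_univ]
  · exact integral_eq_zero_of_add_right_eq_neg (μ := haarAddCircle)
      (fourier_add_half_inv_index h Real.two_pi_pos)

lemma integral_SK (n : ℕ) : (∫ s, SK n s ∂μh) = ((n : ℂ) + 1) := by
  unfold SK
  rw [integral_finset_sum _ (fun i _ =>
    (continuous_finset_sum _ fun k _ => (fourier k).continuous).integrable_T)]
  have h1 : ∀ i ∈ Finset.range (n + 1),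
      (∫ s, ∑ k ∈ Finset.Icc (-(i : ℤ)) (i : ℤ), fourier k s ∂μh) = 1 := by
    intro i _
    rw [integral_finset_sum _ (fun k _ => (fourier k).continuous.integrable_T)]
    simp_rw [integral_fourier]
    rw [Finset.sum_ite_eq' _ (0 : ℤ) (fun _ => (1 : ℂ))]
    simp
  rw [Finset.sum_congr rfl h1]
  simp

lemma integral_Kr (n : ℕ) : (∫ s, Kr n s ∂μh) = (n : ℝ) + 1 := by
  have h1 : (∫ s, (SK n s).re ∂μh) = ((∫ s, SK n s ∂μh)).re :=
    (integral_re ((continuous_SK n).integrable_T))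
  rw [integral_SK] at h1
  simp only [Complex.add_re, Complex.natCast_re, Complex.one_re] at h1
  rw [← h1]
  refine integral_congr_ae (Eventually.of_forall fun s => ?_)
  show Kr n s = (SK n s).re
  rw [SK_ofReal, Complex.ofReal_re]

lemma fourier_nat_pow (j : ℕ) (s : 𝕋) : fourier (j : ℤ) s = (fourier 1 s) ^ j := by
  induction j with
  | zero => simpa using fourier_zero
  | succ j ih =>
      rw [pow_succ, ← ih, fourier_mul]
      norm_cast

/-- Tail bound for the Fejér kernel away from `0`, uniform in `n`. -/
lemma Kr_tail {δ : ℝ} (hδ : 0 < δ) :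
    ∃ C : ℝ, 0 ≤ C ∧ ∀ (n : ℕ) (s : 𝕋), δ ≤ dist s 0 → Kr n s ≤ C := by
  set S : Set 𝕋 := {s | δ ≤ dist s 0} with hS
  rcases S.eq_empty_or_nonempty with hSe | hSne
  · exact ⟨0, le_refl 0, fun n s hs => absurd (show s ∈ S from hs) (by rw [hSe]; simp)⟩
  have hScl : IsClosed S := isClosed_le continuous_const (continuous_id.dist continuous_const)
  have hv : Continuous fun s : 𝕋 => ‖fourier 1 s - 1‖ :=
    ((fourier 1).continuous.sub continuous_const).norm
  obtain ⟨s₀, hs₀S, hmin⟩ := hScl.isCompact.exists_isMinOn hSne hv.continuousOn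
  set c : ℝ := ‖fourier 1 s₀ - 1‖ with hc
  have hne1 : ∀ s : 𝕋, s ∈ S → fourier 1 s ≠ 1 := by
    intro s hs h1
    have hs0 : s ≠ 0 := by
      intro h0
      rw [hS, Set.mem_setOf_eq, h0, dist_self] at hs
      linarith
    apply hs0
    have h2 : fourier (1 : ℤ) (0 : 𝕋) = 1 := by
      rw [fourier_apply]; simp
    exact injective_toCircle (ne_of_gt Real.two_pi_pos) (by
      have := h1.trans h2.symm
      rw [fourier_apply, fourier_apply, one_zsmul, one_zsmul] at this
      exact Circle.coe_inj.mp this)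
  have hcpos : 0 < c := by
    rw [hc, norm_pos_iff, sub_ne_zero]
    exact hne1 s₀ hs₀S
  refine ⟨(2 / c) ^ 2, by positivity, fun n s hs => ?_⟩
  have hsS : s ∈ S := hs
  have hGle : ‖Gk n s‖ ≤ 2 / ‖fourier 1 s - 1‖ := by
    unfold Gk
    simp_rw [fourier_nat_pow]
    have hbpos : (0:ℝ) < ‖fourier 1 s - 1‖ := by
      rw [norm_pos_iff, sub_ne_zero]; exact hne1 s hsS
    rw [geom_sum_eq (hne1 s hsS), norm_div, div_le_div_iff_of_pos_right hbpos]
    calc ‖(fourier 1 s : ℂ) ^ (n + 1) - 1‖ ≤ ‖(fourier 1 s : ℂ) ^ (n + 1)‖ + 1 := by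
          simpa using norm_sub_le ((fourier 1 s : ℂ) ^ (n + 1)) 1
      _ = 2 := by rw [norm_pow, norm_fourier]; norm_num
  have hKr : Kr n s = ‖Gk n s‖ ^ 2 := by
    rw [Kr, ← Complex.sq_norm]
  rw [hKr]
  have h2 : ‖Gk n s‖ ≤ 2 / c := by
    refine hGle.trans ?_
    gcongr
    exact hmin hsS
  exact pow_le_pow_left₀ (norm_nonneg _) h2 2


/-- Uniform continuity on a compact set of continuity points. -/
lemma unif_cont {f : 𝕋 → ℂ} {K : Set 𝕋} (hKclosed : IsClosed K)
    (hK : K ⊆ {x | ContinuousAt f x}) (hne : K.Nonempty) {ε : ℝ} (hε : 0 < ε) :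
    ∃ δ > 0, ∀ x ∈ K, ∀ y : 𝕋, dist y x < δ → dist (f y) (f x) < ε := by
  have hc : ∀ x ∈ K, ∃ d > 0, ∀ y, dist y x < d → dist (f y) (f x) < ε / 2 := by
    intro x hx
    rcases Metric.continuousAt_iff.mp (hK hx) (ε / 2) (by positivity) with ⟨d, hd, h⟩
    exact ⟨d, hd, fun y hy => h hy⟩
  choose! d hd hball using hc
  have hcover : ∀ x ∈ K, Metric.ball x (d x / 2) ∈ 𝓝 x := fun x hx =>
    Metric.ball_mem_nhds x (by have := hd x hx; positivity)
  obtain ⟨t, htK, hcov⟩ :=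
    hKclosed.isCompact.elim_nhds_subcover (fun x => Metric.ball x (d x / 2)) hcover
  have htne : t.Nonempty := by
    obtain ⟨x, hx⟩ := hne
    rcases Set.mem_iUnion₂.mp (hcov hx) with ⟨z, hz, _⟩
    exact ⟨z, hz⟩
  refine ⟨t.inf' htne (fun z => d z / 2), ?_, ?_⟩
  · rw [gt_iff_lt, Finset.lt_inf'_iff]
    intro z hz
    have := hd z (htK z hz)
    positivity
  · intro x hx y hy
    rcases Set.mem_iUnion₂.mp (hcov hx) with ⟨z, hz, hxz⟩
    have hdz := hd z (htK z hz)
    have hδz : t.inf' htne (fun z => d z / 2) ≤ d z / 2 := Finset.inf'_le _ hz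
    have h1 : dist x z < d z / 2 := Metric.mem_ball.mp hxz
    have h2 : dist y z < d z := by
      calc dist y z ≤ dist y x + dist x z := dist_triangle _ _ _
        _ < d z / 2 + d z / 2 := by
            have : dist y x < d z / 2 := lt_of_lt_of_le hy hδz
            linarith
        _ = d z := by ring
    have e1 := hball z (htK z hz) y h2
    have e2 := hball z (htK z hz) x (h1.trans_le (by linarith))
    calc dist (f y) (f x) ≤ dist (f y) (f z) + dist (f z) (f x) := dist_triangle _ _ _
      _ < ε / 2 + ε / 2 := by
          rw [dist_comm (f z) (f x)]
          exact add_lt_add e1 e2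
      _ = ε := by ring

/-- Representation of the Cesàro partial sums as a convolution with the Fejér kernel. -/
lemma sigma_rep {f : 𝕋 → ℂ} (hf : Integrable f μh) (n : ℕ) (x : 𝕋) :
    ∑ i ∈ Finset.range (n + 1), ∑ k ∈ Finset.Icc (-(i : ℤ)) (i : ℤ),
        fourierCoeff f k • fourier k x
      = ∫ t, f t * SK n (x - t) ∂μh := by
  have hint : ∀ k : ℤ, Integrable (fun t => f t * fourier k (x - t)) μh := fun k =>
    hf.mul_cont ((fourier k).continuous.comp (continuous_const.sub continuous_id))
  have h1 : ∀ k : ℤ, fourierCoeff f k • fourier k x = ∫ t, f t * fourier k (x - t) ∂μh := by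
    intro k
    rw [fourierCoeff, smul_eq_mul, ← integral_mul_const]
    refine integral_congr_ae (Eventually.of_forall fun t => ?_)
    simp only [smul_eq_mul, fourier_sub_arg]
    ring
  calc ∑ i ∈ Finset.range (n + 1), ∑ k ∈ Finset.Icc (-(i : ℤ)) (i : ℤ),
        fourierCoeff f k • fourier k x
      = ∑ i ∈ Finset.range (n + 1), ∑ k ∈ Finset.Icc (-(i : ℤ)) (i : ℤ),
          ∫ t, f t * fourier k (x - t) ∂μh := by simp_rw [h1]
    _ = ∑ i ∈ Finset.range (n + 1),
          ∫ t, ∑ k ∈ Finset.Icc (-(i : ℤ)) (i : ℤ), f t * fourier k (x - t) ∂μh := by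
        exact Finset.sum_congr rfl fun i _ => (integral_finset_sum _ fun k _ => hint k).symm
    _ = ∫ t, ∑ i ∈ Finset.range (n + 1), ∑ k ∈ Finset.Icc (-(i : ℤ)) (i : ℤ),
          f t * fourier k (x - t) ∂μh :=
        (integral_finset_sum _ fun i _ => integrable_finset_sum _ fun k _ => hint k).symm
    _ = ∫ t, f t * SK n (x - t) ∂μh := by
        refine integral_congr_ae (Eventually.of_forall fun t => ?_)
        unfold SK
        simp [Finset.mul_sum]

/-- **An extended Fejér theorem** (Theorem 4). Let `f ∈ L¹(𝕋)` and let `K` be a closed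
subset of `C_f`, the set of points of `𝕋` at which `f` is continuous. Then the Cesàro means
`σ_n(x,f)` of the Fourier series of `f` converge to `f(x)` uniformly on `K` as `n → ∞`. -/
theorem fejer_uniform_on_closed_subset_of_continuity_points
    (f : AddCircle (2 * Real.pi) → ℂ)
    (hf : Integrable f haarAddCircle)
    (K : Set (AddCircle (2 * Real.pi))) (hKclosed : IsClosed K)
    (hK : K ⊆ {x | ContinuousAt f x}) :
    TendstoUniformlyOn
      (fun (n : ℕ) (x : AddCircle (2 * Real.pi)) =>
        ((n : ℂ) + 1)⁻¹ • ∑ i ∈ Finset.range (n + 1),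
          ∑ k ∈ Finset.Icc (-(i : ℤ)) (i : ℤ), fourierCoeff f k • fourier k x)
      f atTop K := by
  rcases K.eq_empty_or_nonempty with hKe | hne
  · rw [hKe]; exact tendstoUniformlyOn_empty
  obtain ⟨M, hM⟩ := hKclosed.isCompact.exists_bound_of_continuousOn
    (fun x hx => (hK hx).continuousWithinAt)
  have hM0 : 0 ≤ M := by
    obtain ⟨x, hx⟩ := hne
    exact (norm_nonneg (f x)).trans (hM x hx)
  set I : ℝ := ∫ t, ‖f t‖ ∂μh with hIdef
  have hI0 : 0 ≤ I := integral_nonneg fun t => norm_nonneg _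
  rw [Metric.tendstoUniformlyOn_iff]
  intro ε hε
  obtain ⟨δ, hδ, hUC⟩ := unif_cont hKclosed hK hne (show (0:ℝ) < ε/4 by positivity)
  obtain ⟨C, hC0, hCb⟩ := Kr_tail hδ
  have htail : Tendsto (fun n : ℕ => ((n:ℝ)+1)⁻¹ * ((I + M) * C)) atTop (𝓝 0) := by
    have h0 : Tendsto (fun n : ℕ => ((n:ℝ)+1)⁻¹) atTop (𝓝 0) := by
      simpa [one_div] using tendsto_one_div_add_atTop_nhds_zero_nat (𝕜 := ℝ)
    simpa using h0.mul_const ((I + M) * C)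
  have hev : ∀ᶠ n : ℕ in atTop, ((n:ℝ)+1)⁻¹ * ((I + M) * C) < ε/2 :=
    htail.eventually (gt_mem_nhds (show (0:ℝ) < ε/2 by positivity))
  filter_upwards [hev] with n hn x hx
  have hSKc : Continuous fun t : 𝕋 => SK n (x - t) :=
    (continuous_SK n).comp (continuous_const.sub continuous_id)
  have hKrc : Continuous fun t : 𝕋 => Kr n (x - t) :=
    (continuous_Kr n).comp (continuous_const.sub continuous_id)
  have int1 : Integrable (fun t => f t * SK n (x - t)) μh := hf.mul_cont hSKc
  have intSK : Integrable (fun t : 𝕋 => SK n (x - t)) μh := hSKc.integrable_T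
  have int2 : Integrable (fun t : 𝕋 => f x * SK n (x - t)) μh := intSK.const_mul _
  have intKr : Integrable (fun t : 𝕋 => Kr n (x - t)) μh := hKrc.integrable_T
  have hfx : Integrable (fun t : 𝕋 => ‖f t - f x‖) μh := (hf.sub (integrable_const _)).norm
  have intphi : Integrable (fun t => ‖f t - f x‖ * Kr n (x - t)) μh := hfx.mul_cont hKrc
  have step2 : (∫ t, SK n (x - t) ∂μh) = ((n : ℂ) + 1) := by
    rw [integral_sub_left_eq_self (SK n) μh x, integral_SK]
  have hdiff : (∫ t, (f t - f x) * SK n (x - t) ∂μh)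
      = (∫ t, f t * SK n (x - t) ∂μh) - ((n : ℂ) + 1) * f x := by
    have heq : (fun t => (f t - f x) * SK n (x - t))
        = fun t => f t * SK n (x - t) - f x * SK n (x - t) := by funext t; ring
    rw [heq, integral_sub int1 int2, integral_const_mul, step2]
    ring
  have hne1 : ((n : ℂ) + 1) ≠ 0 := Nat.cast_add_one_ne_zero n
  have key : ((n : ℂ) + 1)⁻¹ • (∑ i ∈ Finset.range (n + 1),
        ∑ k ∈ Finset.Icc (-(i:ℤ)) (i:ℤ), fourierCoeff f k • fourier k x) - f x
      = ((n : ℂ) + 1)⁻¹ * ∫ t, (f t - f x) * SK n (x - t) ∂μh := by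
    rw [sigma_rep hf n x, smul_eq_mul, hdiff]
    field_simp
  have hnormest : ‖∫ t, (f t - f x) * SK n (x - t) ∂μh‖
      ≤ ∫ t, ‖f t - f x‖ * Kr n (x - t) ∂μh := by
    refine (norm_integral_le_integral_norm _).trans_eq ?_
    refine integral_congr_ae (Eventually.of_forall fun t => ?_)
    show ‖(f t - f x) * SK n (x - t)‖ = ‖f t - f x‖ * Kr n (x - t)
    rw [norm_mul, norm_SK]
  set A : Set 𝕋 := Metric.ball x δ with hA
  have hAm : MeasurableSet A := measurableSet_ball
  have hsplit : (∫ t, ‖f t - f x‖ * Kr n (x - t) ∂μh)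
      = (∫ t in A, ‖f t - f x‖ * Kr n (x - t) ∂μh)
        + ∫ t in Aᶜ, ‖f t - f x‖ * Kr n (x - t) ∂μh :=
    (integral_add_compl hAm intphi).symm
  have bound1 : (∫ t in A, ‖f t - f x‖ * Kr n (x - t) ∂μh) ≤ (ε/4) * ((n:ℝ) + 1) := by
    have hmono : (∫ t in A, ‖f t - f x‖ * Kr n (x - t) ∂μh)
        ≤ ∫ t in A, (ε/4) * Kr n (x - t) ∂μh := by
      refine setIntegral_mono_on intphi.integrableOn (intKr.const_mul _).integrableOn hAm ?_
      intro t ht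
      have h1 : dist t x < δ := Metric.mem_ball.mp ht
      have h2 : ‖f t - f x‖ < ε/4 := by
        rw [← dist_eq_norm]; exact hUC x hx t h1
      exact mul_le_mul_of_nonneg_right h2.le (Kr_nonneg _ _)
    refine hmono.trans ?_
    rw [integral_const_mul]
    have h3 : (∫ t in A, Kr n (x - t) ∂μh) ≤ ∫ t, Kr n (x - t) ∂μh :=
      setIntegral_le_integral intKr (Eventually.of_forall fun t => Kr_nonneg _ _)
    have h4 : (∫ t, Kr n (x - t) ∂μh) = (n:ℝ) + 1 := by
      rw [integral_sub_left_eq_self (Kr n) μh x, integral_Kr]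
    rw [← h4]
    exact mul_le_mul_of_nonneg_left h3 (by positivity)
  have bound2 : (∫ t in Aᶜ, ‖f t - f x‖ * Kr n (x - t) ∂μh) ≤ (I + M) * C := by
    have hmono : (∫ t in Aᶜ, ‖f t - f x‖ * Kr n (x - t) ∂μh)
        ≤ ∫ t in Aᶜ, ‖f t - f x‖ * C ∂μh := by
      refine setIntegral_mono_on intphi.integrableOn (hfx.mul_const _).integrableOn hAm.compl ?_
      intro t ht
      have h2 : ¬ dist t x < δ := by simpa [hA, Metric.mem_ball] using ht
      have h3 : dist (x - t) 0 = dist t x := by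
        rw [dist_zero_right, dist_eq_norm, norm_sub_rev]
      have h1 : δ ≤ dist (x - t) 0 := by rw [h3]; exact not_lt.mp h2
      exact mul_le_mul_of_nonneg_left (hCb n _ h1) (norm_nonneg _)
    refine hmono.trans ?_
    have h5 : (∫ t in Aᶜ, ‖f t - f x‖ * C ∂μh) ≤ ∫ t, ‖f t - f x‖ * C ∂μh :=
      setIntegral_le_integral (hfx.mul_const _)
        (Eventually.of_forall fun t => by positivity)
    refine h5.trans ?_
    rw [integral_mul_const]
    have h6 : (∫ t, ‖f t - f x‖ ∂μh) ≤ I + M := by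
      have h7 : (∫ t, ‖f t - f x‖ ∂μh) ≤ ∫ t, (‖f t‖ + ‖f x‖) ∂μh :=
        integral_mono hfx (hf.norm.add (integrable_const _)) fun t => norm_sub_le _ _
      rw [integral_add hf.norm (integrable_const _), integral_const, probReal_univ,
        one_smul] at h7
      have h8 : ‖f x‖ ≤ M := hM x hx
      calc (∫ t, ‖f t - f x‖ ∂μh) ≤ I + ‖f x‖ := h7
        _ ≤ I + M := by linarith
    exact mul_le_mul_of_nonneg_right h6 hC0
  have hnorminv : ‖((n : ℂ) + 1)⁻¹‖ = ((n:ℝ) + 1)⁻¹ := by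
    rw [norm_inv]
    congr 1
    have hcast : ((n : ℂ) + 1) = ((n + 1 : ℕ) : ℂ) := by push_cast; ring
    rw [hcast, Complex.norm_natCast]
    push_cast
    ring
  show dist (f x) (((n : ℂ) + 1)⁻¹ • ∑ i ∈ Finset.range (n + 1),
      ∑ k ∈ Finset.Icc (-(i:ℤ)) (i:ℤ), fourierCoeff f k • fourier k x) < ε
  rw [dist_comm, dist_eq_norm, key, norm_mul, hnorminv]
  have hfinal : ((n:ℝ)+1)⁻¹ * ‖∫ t, (f t - f x) * SK n (x - t) ∂μh‖
      ≤ ((n:ℝ)+1)⁻¹ * ((ε/4) * ((n:ℝ)+1) + (I + M) * C) := by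
    refine mul_le_mul_of_nonneg_left ?_ (by positivity)
    refine hnormest.trans ?_
    rw [hsplit]
    exact add_le_add bound1 bound2
  have hsimp : ((n:ℝ)+1)⁻¹ * ((ε/4) * ((n:ℝ)+1) + (I + M) * C)
      = ε/4 + ((n:ℝ)+1)⁻¹ * ((I + M) * C) := by
    have hnn : ((n:ℝ)+1) ≠ 0 := by positivity
    have h9 : ((n:ℝ)+1)⁻¹ * ((ε/4) * ((n:ℝ)+1)) = ε/4 := by
      field_simp
    rw [mul_add, h9]
  calc ((n:ℝ)+1)⁻¹ * ‖∫ t, (f t - f x) * SK n (x - t) ∂μh‖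
      ≤ ε/4 + ((n:ℝ)+1)⁻¹ * ((I + M) * C) := by rw [← hsimp]; exact hfinal
    _ < ε/4 + ε/2 := by linarith
    _ < ε := by linarith

end FejerAux
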